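/- If G is a tight (1,0)-stable graph on n = 2k vertices, then every vertex of G has degree at most k. -/

import Mathlib

open SimpleGraph Set

/-- The independence number of `G` restricted to a vertex subset `A`:
the largest cardinality of a finite set of vertices inside `A` that is
pairwise non-adjacent in `G`. -/
noncomputable def indepNumOn {V : Type*} (G : SimpleGraph V) (A : Set V) : ℕ :=
  sSup {n | ∃ s : Finset V, ↑s ⊆ A ∧ s.card = n ∧
    ∀ x ∈ s, ∀ y ∈ s, x ≠ y → ¬ G.Adj x y}

/-- The independence number of `G`. -/
noncomputable def indepNum {V : Type*} (G : SimpleGraph V) : ℕ :=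
  indepNumOn G Set.univ

/-- `G` is `(k, l)`-stable: removing any `k` vertices decreases the
independence number by at most `l`. -/
def IsStable {V : Type*} (G : SimpleGraph V) (k l : ℕ) : Prop :=
  ∀ S : Finset V, S.card = k → _root_.indepNum G ≤ indepNumOn G (↑S : Set V)ᶜ + l

private lemma bddAbove_aux {V : Type*} [Fintype V] (G : SimpleGraph V) (A : Set V) :
    BddAbove {n | ∃ s : Finset V, ↑s ⊆ A ∧ s.card = n ∧
      ∀ x ∈ s, ∀ y ∈ s, x ≠ y → ¬ G.Adj x y} := by
  refine ⟨Fintype.card V, fun n hn => ?_⟩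
  obtain ⟨s, -, rfl, -⟩ := hn
  exact s.card_le_univ

private lemma le_indepNumOn {V : Type*} [Fintype V] (G : SimpleGraph V) (A : Set V)
    (s : Finset V) (hs : ↑s ⊆ A) (hind : ∀ x ∈ s, ∀ y ∈ s, x ≠ y → ¬ G.Adj x y) :
    s.card ≤ indepNumOn G A :=
  le_csSup (bddAbove_aux G A) ⟨s, hs, rfl, hind⟩

private lemma exists_indepOn {V : Type*} [Fintype V] (G : SimpleGraph V) (A : Set V) :
    ∃ s : Finset V, ↑s ⊆ A ∧ s.card = indepNumOn G A ∧
      ∀ x ∈ s, ∀ y ∈ s, x ≠ y → ¬ G.Adj x y := by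
  have h := Nat.sSup_mem (s := {n | ∃ s : Finset V, ↑s ⊆ A ∧ s.card = n ∧
      ∀ x ∈ s, ∀ y ∈ s, x ≠ y → ¬ G.Adj x y})
    ⟨0, ⟨∅, by simp, by simp, by simp⟩⟩ (bddAbove_aux G A)
  obtain ⟨s, h1, h2, h3⟩ := h
  exact ⟨s, h1, h2, h3⟩

theorem tight_one_zero_maxDegree_le {V : Type*} [Fintype V] (G : SimpleGraph V) (k : ℕ)
    (hcard : Fintype.card V = 2 * k) (halpha : _root_.indepNum G = k)
    (hstable : ∀ v : V, indepNumOn G ({v} : Set V)ᶜ = k) :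
    ∀ v : V, (G.neighborSet v).ncard ≤ k := by
  classical
  intro v
  by_contra hdeg
  push_neg at hdeg
  set W : Finset V := Finset.univ.filter (fun x => G.Adj v x) with hW
  have hWset : G.neighborSet v = ↑W := by
    ext x; simp [hW]
  rw [hWset, Set.ncard_coe_finset] at hdeg
  -- every independent set has at most k elements
  have hmax : ∀ s : Finset V, (∀ x ∈ s, ∀ y ∈ s, x ≠ y → ¬ G.Adj x y) → s.card ≤ k := by
    intro s hs
    have h := le_indepNumOn G Set.univ s (by simp) hs
    have : indepNumOn G Set.univ = k := halpha
    omega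
  -- existence of size-k independent sets avoiding each vertex
  have havoid : ∀ u : V, ∃ T : Finset V, T.card = k ∧ u ∉ T ∧
      (∀ x ∈ T, ∀ y ∈ T, x ≠ y → ¬ G.Adj x y) := by
    intro u
    obtain ⟨T, hTA, hTcard, hTind⟩ := exists_indepOn G ({u} : Set V)ᶜ
    refine ⟨T, by rw [hTcard, hstable u], ?_, hTind⟩
    intro hu
    have := hTA (Finset.mem_coe.mpr hu)
    simp at this
  -- every size-k independent set avoids v
  have hv_notin : ∀ T : Finset V, T.card = k →
      (∀ x ∈ T, ∀ y ∈ T, x ≠ y → ¬ G.Adj x y) → v ∉ T := by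
    intro T hTcard hTind hvT
    have hsub : W ⊆ Finset.univ \ T := by
      intro x hx
      simp only [hW, Finset.mem_filter] at hx
      simp only [Finset.mem_sdiff, Finset.mem_univ, true_and]
      intro hxT
      exact hTind v hvT x hxT (G.ne_of_adj hx.2) hx.2
    have h := Finset.card_le_card hsub
    rw [Finset.card_sdiff_of_subset (Finset.subset_univ T), Finset.card_univ, hcard, hTcard] at h
    omega
  have hk1 : 1 ≤ k := by
    have h := W.card_le_univ
    rw [hcard] at h
    omega
  obtain ⟨S, hScard, hvS, hSind⟩ := havoid v
  -- the "outside neighborhood" operator (neighbors of t, excluding v)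
  set N' : Finset V → Finset V := fun t =>
    Finset.univ.filter (fun x => x ≠ v ∧ ∃ a ∈ t, G.Adj a x) with hN'
  have hN'mono : ∀ t₁ t₂ : Finset V, t₁ ⊆ t₂ → N' t₁ ⊆ N' t₂ := by
    intro t₁ t₂ h x hx
    simp only [hN', Finset.mem_filter, Finset.mem_univ, true_and] at hx ⊢
    obtain ⟨hxv, a, ha, hadj⟩ := hx
    exact ⟨hxv, a, h ha, hadj⟩
  -- S has a Hall-type defect
  have hNS : (N' S).card < S.card := by
    have hsub : N' S ⊆ (Finset.univ \ S).erase v := by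
      intro x hx
      simp only [hN', Finset.mem_filter, Finset.mem_univ, true_and] at hx
      obtain ⟨hxv, a, haS, hadj⟩ := hx
      refine Finset.mem_erase.mpr ⟨hxv, Finset.mem_sdiff.mpr ⟨Finset.mem_univ x, ?_⟩⟩
      intro hxS
      exact hSind a haS x hxS (G.ne_of_adj hadj) hadj
    have h1 := Finset.card_le_card hsub
    have hvmem : v ∈ Finset.univ \ S := Finset.mem_sdiff.mpr ⟨Finset.mem_univ v, hvS⟩
    rw [Finset.card_erase_of_mem hvmem, Finset.card_sdiff_of_subset (Finset.subset_univ S),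
      Finset.card_univ, hcard, hScard] at h1
    omega
  -- take a minimal defective subset S₀ of S
  set D : Finset (Finset V) :=
    S.powerset.filter (fun t => t.Nonempty ∧ (N' t).card < t.card) with hD
  have hSmemD : S ∈ D := by
    refine Finset.mem_filter.mpr ⟨Finset.mem_powerset.mpr (Finset.Subset.refl S), ?_, hNS⟩
    exact Finset.card_pos.mp (by omega)
  obtain ⟨S₀, hS₀D, hS₀min⟩ := Finset.exists_min_image D Finset.card ⟨S, hSmemD⟩
  have hS₀sub : S₀ ⊆ S := Finset.mem_powerset.mp (Finset.mem_filter.mp hS₀D).1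
  have hS₀ne : S₀.Nonempty := (Finset.mem_filter.mp hS₀D).2.1
  have hS₀def : (N' S₀).card < S₀.card := (Finset.mem_filter.mp hS₀D).2.2
  obtain ⟨u, huS₀⟩ := hS₀ne
  obtain ⟨T, hTcard, huT, hTind⟩ := havoid u
  have hvT : v ∉ T := hv_notin T hTcard hTind
  set A : Finset V := S₀ \ T with hA
  set B : Finset V := S₀ ∩ T with hB
  have hA_sub_S₀ : A ⊆ S₀ := Finset.sdiff_subset
  have hB_sub_S₀ : B ⊆ S₀ := Finset.inter_subset_left
  have hA_sub_S : A ⊆ S := hA_sub_S₀.trans hS₀sub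
  -- exchange argument: T' = (T \ (A ∪ N(A))) ∪ A is independent
  set NA : Finset V := Finset.univ.filter (fun x => ∃ a ∈ A, G.Adj a x) with hNA
  set T' : Finset V := (T \ (A ∪ NA)) ∪ A with hT'
  have hT'ind : ∀ x ∈ T', ∀ y ∈ T', x ≠ y → ¬ G.Adj x y := by
    intro x hx y hy hxy hadj
    rw [hT', Finset.mem_union] at hx hy
    rcases hx with hx | hx <;> rcases hy with hy | hy
    · exact hTind x (Finset.mem_sdiff.mp hx).1 y (Finset.mem_sdiff.mp hy).1 hxy hadj
    · have hmem : x ∈ NA := by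
        rw [hNA]
        exact Finset.mem_filter.mpr ⟨Finset.mem_univ x, y, hy, hadj.symm⟩
      exact (Finset.mem_sdiff.mp hx).2 (Finset.mem_union_right _ hmem)
    · have hmem : y ∈ NA := by
        rw [hNA]
        exact Finset.mem_filter.mpr ⟨Finset.mem_univ y, x, hx, hadj⟩
      exact (Finset.mem_sdiff.mp hy).2 (Finset.mem_union_right _ hmem)
    · exact hSind x (hA_sub_S hx) y (hA_sub_S hy) hxy hadj
  have hdisjT'A : Disjoint (T \ (A ∪ NA)) A := by
    rw [Finset.disjoint_left]
    intro x hx hxA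
    exact (Finset.mem_sdiff.mp hx).2 (Finset.mem_union_left _ hxA)
  have hT'card : T'.card = (T \ (A ∪ NA)).card + A.card := by
    rw [hT', Finset.card_union_of_disjoint hdisjT'A]
  have hsd : (T \ (A ∪ NA)).card + (T ∩ (A ∪ NA)).card = T.card :=
    Finset.card_sdiff_add_card_inter T (A ∪ NA)
  have hTAempty : T ∩ A = ∅ := by
    rw [hA]
    ext x
    simp only [Finset.mem_inter, Finset.mem_sdiff, Finset.notMem_empty, iff_false]
    rintro ⟨hxT, -, hxnT⟩
    exact hxnT hxT
  have hTinter : T ∩ (A ∪ NA) = T ∩ NA := by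
    rw [Finset.inter_union_distrib_left, hTAempty, Finset.empty_union]
  -- |A| ≤ |T ∩ NA|
  have hAle : A.card ≤ (T ∩ NA).card := by
    have h1 := hmax T' hT'ind
    rw [hT'card] at h1
    rw [hTinter, hTcard] at hsd
    omega
  -- T ∩ NA sits inside N' A
  have hCsub : T ∩ NA ⊆ N' A := by
    intro x hx
    obtain ⟨hxT, hxNA⟩ := Finset.mem_inter.mp hx
    rw [hNA] at hxNA
    obtain ⟨-, a, haA, hadj⟩ := Finset.mem_filter.mp hxNA
    simp only [hN', Finset.mem_filter, Finset.mem_univ, true_and]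
    exact ⟨fun h => hvT (h ▸ hxT), a, haA, hadj⟩
  -- |B| ≤ |N' B| by minimality of S₀
  have hBle : B.card ≤ (N' B).card := by
    rcases Finset.eq_empty_or_nonempty B with hBe | hBne
    · simp [hBe]
    · by_contra hlt
      push_neg at hlt
      have hBmem : B ∈ D := by
        refine Finset.mem_filter.mpr
          ⟨Finset.mem_powerset.mpr (hB_sub_S₀.trans hS₀sub), hBne, hlt⟩
      have h1 := hS₀min B hBmem
      have hBlt : B.card < S₀.card := by
        refine Finset.card_lt_card ?_
        rw [Finset.ssubset_iff_of_subset hB_sub_S₀]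
        exact ⟨u, huS₀, fun hu => huT (Finset.mem_inter.mp hu).2⟩
      omega
  -- N' B and T ∩ NA are disjoint
  have hdisjBC : Disjoint (N' B) (T ∩ NA) := by
    rw [Finset.disjoint_left]
    intro x hx hxC
    simp only [hN', Finset.mem_filter, Finset.mem_univ, true_and] at hx
    obtain ⟨-, b, hbB, hadj⟩ := hx
    have hbT : b ∈ T := (Finset.mem_inter.mp hbB).2
    have hxT : x ∈ T := (Finset.mem_inter.mp hxC).1
    exact hTind b hbT x hxT (G.ne_of_adj hadj) hadj
  have hunion_sub : (N' B) ∪ (T ∩ NA) ⊆ N' S₀ := by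
    apply Finset.union_subset
    · exact hN'mono B S₀ hB_sub_S₀
    · exact hCsub.trans (hN'mono A S₀ hA_sub_S₀)
  have hfinal : B.card + A.card ≤ (N' S₀).card := by
    have h1 := Finset.card_le_card hunion_sub
    rw [Finset.card_union_of_disjoint hdisjBC] at h1
    omega
  have hABcard : A.card + B.card = S₀.card :=
    Finset.card_sdiff_add_card_inter S₀ T
  omega
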